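/- Let κ > 1, ξ < 0, a₀ > 0, and suppose a₁ ≥ √(−2ξ/(κ−1)) · a₀^{(1−κ)/2}. Then there exists a twice continuously differentiable function a : [0,∞) → ℝ with a(t) > 0 for all t ≥ 0, a''(t) = ξ / a(t)^κ for all t ≥ 0, a(0) = a₀, a'(0) = a₁, and a(t) → +∞ as t → +∞. -/

import Mathlib

open Real Set Filter Topology MeasureTheory

/-- Emden equation, global case: if `κ > 1`, `ξ < 0` and
`a₁ ≥ √(−2ξ/(κ−1)) a₀^{(1−κ)/2}`, there exists a global positive `C²` solution
on `[0,∞)` of `a'' = ξ/a^κ`, `a(0) = a₀ > 0`, `a'(0) = a₁`, with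
`a(t) → +∞` as `t → +∞`. -/
theorem emden_global_existence_negative_xi
    (κ ξ a₀ a₁ : ℝ) (hκ : 1 < κ) (hξ : ξ < 0) (ha₀ : 0 < a₀)
    (ha₁ : Real.sqrt (-2 * ξ / (κ - 1)) * a₀ ^ ((1 - κ) / 2) ≤ a₁) :
    ∃ a a' a'' : ℝ → ℝ,
      (∀ t ∈ Set.Ici (0 : ℝ), HasDerivAt a (a' t) t) ∧
      (∀ t ∈ Set.Ici (0 : ℝ), HasDerivAt a' (a'' t) t) ∧
      ContinuousOn a'' (Set.Ici 0) ∧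
      (∀ t ∈ Set.Ici (0 : ℝ), 0 < a t) ∧
      (∀ t ∈ Set.Ici (0 : ℝ), a'' t = ξ / a t ^ κ) ∧
      a 0 = a₀ ∧ a' 0 = a₁ ∧
      Filter.Tendsto a Filter.atTop Filter.atTop := by
  have hκ1 : (0:ℝ) < κ - 1 := by linarith
  set c : ℝ := -2 * ξ / (κ - 1) with hc_def
  have hc : 0 < c := div_pos (by linarith) hκ1
  have ha₁pos : 0 < a₁ :=
    lt_of_lt_of_le (mul_pos (Real.sqrt_pos.mpr hc) (Real.rpow_pos_of_pos ha₀ _)) ha₁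
  set E : ℝ := a₁ ^ 2 - c * a₀ ^ ((1:ℝ) - κ) with hE_def
  have hsqE : c * a₀ ^ ((1:ℝ) - κ) ≤ a₁ ^ 2 := by
    have h1 : (Real.sqrt c * a₀ ^ ((1 - κ)/2)) ^ 2 ≤ a₁ ^ 2 := by
      apply pow_le_pow_left₀ _ ha₁
      positivity
    calc c * a₀ ^ ((1:ℝ) - κ)
        = (Real.sqrt c * a₀ ^ ((1 - κ)/2)) ^ 2 := by
          rw [mul_pow, Real.sq_sqrt hc.le,
            ← Real.rpow_natCast (a₀ ^ ((1 - κ)/2)) 2, ← Real.rpow_mul ha₀.le]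
          norm_num
      _ ≤ a₁ ^ 2 := h1
  have hE : 0 ≤ E := by rw [hE_def]; linarith
  clear_value c E
  have hgpos : ∀ x : ℝ, 0 < x → 0 < E + c * x ^ ((1:ℝ) - κ) := by
    intro x hx
    have := Real.rpow_pos_of_pos hx ((1:ℝ) - κ)
    nlinarith
  set h : ℝ → ℝ := fun s => (Real.sqrt (E + c * s ^ ((1:ℝ) - κ)))⁻¹ with hh_def
  have hhpos : ∀ s : ℝ, 0 < s → 0 < h s := fun s hs =>
    inv_pos.mpr (Real.sqrt_pos.mpr (hgpos s hs))
  have hhcont : ContinuousOn h (Ioi 0) := by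
    intro s hs
    apply ContinuousAt.continuousWithinAt
    have h1 : ContinuousAt (fun s : ℝ => s ^ ((1:ℝ) - κ)) s :=
      Real.continuousAt_rpow_const s _ (Or.inl (ne_of_gt hs))
    have h2 : ContinuousAt (fun s : ℝ => E + c * s ^ ((1:ℝ) - κ)) s :=
      continuousAt_const.add (continuousAt_const.mul h1)
    exact (Real.continuous_sqrt.continuousAt.comp h2).inv₀
      (ne_of_gt (Real.sqrt_pos.mpr (hgpos s hs)))
  have hint : ∀ x : ℝ, 0 < x → IntervalIntegrable h volume a₀ x := by
    intro x hx
    apply ContinuousOn.intervalIntegrable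
    apply hhcont.mono
    intro s hs
    exact lt_of_lt_of_le (lt_min ha₀ hx) hs.1
  set F : ℝ → ℝ := fun x => ∫ s in a₀..x, h s with hF_def
  have hFderiv : ∀ x : ℝ, 0 < x → HasDerivAt F (h x) x := fun x hx =>
    intervalIntegral.integral_hasDerivAt_right (hint x hx)
      (hhcont.stronglyMeasurableAtFilter isOpen_Ioi x hx)
      (hhcont.continuousAt (Ioi_mem_nhds hx))
  have hFcont : ContinuousOn F (Ioi 0) := fun x hx =>
    ((hFderiv x hx).continuousAt).continuousWithinAt
  have ha₀2 : (0:ℝ) < a₀ / 2 := by linarith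
  have hS : Ici (a₀/2) ⊆ Ioi (0:ℝ) := fun x hx => lt_of_lt_of_le ha₀2 hx
  have hFmono : StrictMonoOn F (Ici (a₀/2)) := by
    apply strictMonoOn_of_deriv_pos (convex_Ici _) (hFcont.mono hS)
    intro x hx
    rw [interior_Ici] at hx
    have hx0 : 0 < x := lt_trans ha₀2 hx
    rw [(hFderiv x hx0).deriv]
    exact hhpos x hx0
  have hFa₀ : F a₀ = 0 := intervalIntegral.integral_same
  have hhge : ∀ s : ℝ, a₀ ≤ s → a₁⁻¹ ≤ h s := by
    intro s hs
    have hs0 : 0 < s := lt_of_lt_of_le ha₀ hs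
    have h1 : s ^ ((1:ℝ) - κ) ≤ a₀ ^ ((1:ℝ) - κ) :=
      Real.rpow_le_rpow_of_nonpos ha₀ hs (by linarith)
    have h2 : E + c * s ^ ((1:ℝ) - κ) ≤ a₁ ^ 2 := by
      have := mul_le_mul_of_nonneg_left h1 hc.le
      rw [hE_def]; linarith
    have h3 : Real.sqrt (E + c * s ^ ((1:ℝ) - κ)) ≤ a₁ := by
      calc Real.sqrt (E + c * s ^ ((1:ℝ) - κ)) ≤ Real.sqrt (a₁ ^ 2) := Real.sqrt_le_sqrt h2
        _ = a₁ := Real.sqrt_sq ha₁pos.le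
    exact inv_anti₀ (Real.sqrt_pos.mpr (hgpos s hs0)) h3
  have hFge : ∀ x : ℝ, a₀ ≤ x → (x - a₀) * a₁⁻¹ ≤ F x := by
    intro x hx
    have h1 : (∫ _ in a₀..x, a₁⁻¹) ≤ ∫ s in a₀..x, h s :=
      intervalIntegral.integral_mono_on hx intervalIntegrable_const
        (hint x (lt_of_lt_of_le ha₀ hx)) (fun s hs => hhge s hs.1)
    simpa [intervalIntegral.integral_const, smul_eq_mul] using h1
  set L : ℝ := F (a₀/2) with hL_def
  have hL0 : L < 0 := by
    rw [hL_def, ← hFa₀]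
    exact hFmono self_mem_Ici (by simp; linarith) (by linarith)
  have hsurj : ∀ t : ℝ, L ≤ t → ∃ x, a₀/2 ≤ x ∧ F x = t := by
    intro t ht
    set X : ℝ := a₀ + a₁ * (max t 0 + 1) with hX_def
    have hmax : (0:ℝ) ≤ max t 0 := le_max_right t 0
    have hX1 : a₀ ≤ X := by nlinarith
    have hXeq : (X - a₀) * a₁⁻¹ = max t 0 + 1 := by
      rw [hX_def]
      field_simp
      ring
    have hX2 : t ≤ F X := by
      have h4 := hFge X hX1
      have h5 : t ≤ max t 0 + 1 := by have := le_max_left t 0; linarith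
      linarith [hXeq ▸ h4]
    have hXY : a₀/2 ≤ X := by linarith
    have hcont2 : ContinuousOn F (Icc (a₀/2) X) :=
      hFcont.mono (fun s hs => lt_of_lt_of_le ha₀2 hs.1)
    obtain ⟨x, hx, hfx⟩ := intermediate_value_Icc hXY hcont2 ⟨ht, hX2⟩
    exact ⟨x, hx.1, hfx⟩
  have hmaps : ∀ x : ℝ, a₀/2 ≤ x → L ≤ F x := fun x hx =>
    hFmono.monotoneOn self_mem_Ici hx hx
  haveI : OrdConnected (Ici (a₀/2)) := ordConnected_Ici
  haveI : OrdConnected (Ici L) := ordConnected_Ici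
  set Φ : Ici (a₀/2) → Ici L := fun x => ⟨F x, hmaps x x.2⟩ with hΦ_def
  have hΦmono : StrictMono Φ := by
    intro x y hxy
    exact Subtype.mk_lt_mk.mpr (hFmono x.2 y.2 (Subtype.coe_lt_coe.mpr hxy))
  have hΦsurj : Function.Surjective Φ := by
    intro t
    obtain ⟨x, hx, hfx⟩ := hsurj t t.2
    exact ⟨⟨x, hx⟩, Subtype.ext hfx⟩
  set e := StrictMono.orderIsoOfSurjective Φ hΦmono hΦsurj with he_def
  set a : ℝ → ℝ := fun t => if ht : L ≤ t then ((e.symm ⟨t, ht⟩ : Ici (a₀/2)) : ℝ) else a₀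
    with ha_def
  have haS : ∀ t : ℝ, L ≤ t → a₀/2 ≤ a t := by
    intro t ht
    rw [ha_def]
    simp only [dif_pos ht]
    exact (e.symm ⟨t, ht⟩).2
  have hFat : ∀ t : ℝ, L ≤ t → F (a t) = t := by
    intro t ht
    rw [ha_def]
    simp only [dif_pos ht]
    exact congrArg Subtype.val (e.apply_symm_apply ⟨t, ht⟩)
  have ha0 : a 0 = a₀ := by
    have h1 : a (F a₀) = a₀ := by
      rw [ha_def]
      simp only [dif_pos (hmaps a₀ (by linarith))]
      have h2 : e.symm ⟨F a₀, hmaps a₀ (by linarith)⟩ = ⟨a₀, by simp; linarith⟩ :=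
        e.symm_apply_apply ⟨a₀, by simp; linarith⟩
      rw [h2]
    rwa [hFa₀] at h1
  have hacont : ContinuousOn a (Ici L) := by
    rw [continuousOn_iff_continuous_restrict]
    have hres : (Ici L).restrict a = fun t : Ici L => ((e.symm t : Ici (a₀/2)) : ℝ) := by
      funext t
      show a ↑t = _
      rw [ha_def]
      exact dif_pos t.2
    show Continuous ((Ici L).restrict a)
    rw [hres]
    exact continuous_subtype_val.comp e.symm.continuous
  have hapos : ∀ t : ℝ, L ≤ t → 0 < a t := fun t ht => lt_of_lt_of_le ha₀2 (haS t ht)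
  clear_value h F L Φ e a
  have ha' : ∀ t : ℝ, L < t →
      HasDerivAt a (Real.sqrt (E + c * a t ^ ((1:ℝ) - κ))) t := by
    intro t ht
    have hat : 0 < a t := hapos t ht.le
    have hkey : HasDerivAt a (h (a t))⁻¹ t := by
      apply HasDerivAt.of_local_left_inverse (hacont.continuousAt (Ici_mem_nhds ht))
        (hFderiv (a t) hat) (ne_of_gt (hhpos _ hat))
      filter_upwards [Ioi_mem_nhds ht] with y hy
      exact hFat y hy.le
    simpa only [hh_def, inv_inv] using hkey
  have ha'' : ∀ t : ℝ, L < t →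
      HasDerivAt (fun t => Real.sqrt (E + c * a t ^ ((1:ℝ) - κ))) (ξ / a t ^ κ) t := by
    intro t ht
    have hat : 0 < a t := hapos t ht.le
    have hgat : 0 < E + c * a t ^ ((1:ℝ) - κ) := hgpos _ hat
    have hsqpos : 0 < Real.sqrt (E + c * a t ^ ((1:ℝ) - κ)) := Real.sqrt_pos.mpr hgat
    have h1 := (ha' t ht).rpow_const (p := (1:ℝ) - κ) (Or.inl (ne_of_gt hat))
    have h2 := ((h1.const_mul c).const_add E).sqrt (ne_of_gt hgat)
    convert h2 using 1
    rw [show (1:ℝ) - κ - 1 = -κ by ring, Real.rpow_neg hat.le]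
    have hP : (0:ℝ) < a t ^ κ := Real.rpow_pos_of_pos hat κ
    have hc2 : c * (1 - κ) = 2 * ξ := by
      rw [hc_def]
      field_simp
      ring
    field_simp
    linear_combination -hc2
  refine ⟨a, fun t => Real.sqrt (E + c * a t ^ ((1:ℝ) - κ)), fun t => ξ / a t ^ κ,
    ?_, ?_, ?_, ?_, ?_, ?_, ?_, ?_⟩
  · exact fun t ht => ha' t (lt_of_lt_of_le hL0 ht)
  · exact fun t ht => ha'' t (lt_of_lt_of_le hL0 ht)
  · apply ContinuousOn.div continuousOn_const
    · apply ContinuousOn.rpow_const (hacont.mono (fun t ht => le_trans hL0.le ht))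
      intro t ht
      exact Or.inl (ne_of_gt (hapos t (le_trans hL0.le ht)))
    · intro t ht
      exact ne_of_gt (Real.rpow_pos_of_pos (hapos t (le_trans hL0.le ht)) κ)
  · exact fun t ht => hapos t (le_trans hL0.le ht)
  · intro t ht; rfl
  · exact ha0
  · show Real.sqrt (E + c * a 0 ^ ((1:ℝ) - κ)) = a₁
    rw [ha0]
    have hEq : E + c * a₀ ^ ((1:ℝ) - κ) = a₁ ^ 2 := by rw [hE_def]; ring
    rw [hEq, Real.sqrt_sq ha₁pos.le]
  · rw [tendsto_atTop]
    intro M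
    rw [eventually_atTop]
    refine ⟨max 0 (F (max M a₀)), fun t ht => ?_⟩
    have ht0 : (0:ℝ) ≤ t := le_trans (le_max_left _ _) ht
    have htL : L ≤ t := le_trans hL0.le ht0
    have hM : a₀/2 ≤ max M a₀ := le_trans (by linarith) (le_max_right _ _)
    have h1 : F (max M a₀) ≤ F (a t) := by
      rw [hFat t htL]
      exact le_trans (le_max_right _ _) ht
    have h2 : max M a₀ ≤ a t := by
      by_contra hcon
      push_neg at hcon
      have := hFmono (haS t htL) hM hcon
      linarith
    exact le_trans (le_max_left _ _) h2
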